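/- For the symmetric two-component mixture f(x) = ½φ(x−θ₁) + ½φ(x−θ₂) with θ₁ = t − a and θ₂ = t + a (a > 0), the limiting Viterbi-training mean for the first component, μ₁(a) = ∫_{−∞}^{t} x f(x) dx / ∫_{−∞}^{t} f(x) dx, equals t − a(1 − 2Φ(−a)) − 2φ(−a), i.e. μ₁(a) = −a(1−2Φ(−a)) − 2φ(a) + t. By symmetry, μ₂(a) = 2t − μ₁(a). -/

import Mathlib

open Real Set MeasureTheory

/-- standard normal density -/
noncomputable def stdPhi (x : ℝ) : ℝ := (Real.sqrt (2 * Real.pi))⁻¹ * Real.exp (-x ^ 2 / 2)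

/-- standard normal CDF -/
noncomputable def stdCDF (t : ℝ) : ℝ := ∫ x in Set.Iic t, stdPhi x

open Filter Topology

lemma stdPhi_eq : stdPhi = fun x => (Real.sqrt (2 * Real.pi))⁻¹ * Real.exp (-(2⁻¹ : ℝ) * x ^ 2) := by
  funext x; unfold stdPhi; ring_nf

lemma stdPhi_integrable : Integrable stdPhi := by
  rw [stdPhi_eq]
  exact (integrable_exp_neg_mul_sq (by norm_num : (0:ℝ) < 2⁻¹)).const_mul _

lemma xphi_integrable : Integrable (fun x => x * stdPhi x) := by
  have : (fun x => x * stdPhi x) = fun x => (Real.sqrt (2 * Real.pi))⁻¹ * (x * Real.exp (-(2⁻¹:ℝ) * x ^ 2)) := by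
    funext x; unfold stdPhi; ring_nf
  rw [this]
  exact (integrable_mul_exp_neg_mul_sq (by norm_num : (0:ℝ) < 2⁻¹)).const_mul _

lemma stdPhi_total : ∫ x, stdPhi x = 1 := by
  rw [stdPhi_eq]
  rw [integral_const_mul, integral_gaussian]
  rw [show Real.pi / 2⁻¹ = 2 * Real.pi by ring]
  exact inv_mul_cancel₀ (by positivity)

lemma stdPhi_even (x : ℝ) : stdPhi (-x) = stdPhi x := by
  unfold stdPhi; rw [neg_pow]; ring_nf

lemma stdPhi_hasDeriv (x : ℝ) : HasDerivAt (fun y => -stdPhi y) (x * stdPhi x) x := by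
  have h1 : HasDerivAt (fun y : ℝ => -y ^ 2 / 2) (-x) x := by
    have := ((hasDerivAt_pow 2 x).neg.div_const 2)
    refine this.congr_deriv ?_
    simp; ring
  have h2 := (h1.exp.const_mul ((Real.sqrt (2 * Real.pi))⁻¹)).neg
  refine h2.congr_deriv ?_
  unfold stdPhi; ring

lemma stdPhi_tendsto_atBot : Tendsto (fun x => -stdPhi x) atBot (𝓝 0) := by
  have hsq : Tendsto (fun x : ℝ => x ^ 2) atBot atTop := by
    have h2 : Tendsto (fun x : ℝ => |x| ^ 2) atBot atTop :=
      (tendsto_pow_atTop (by norm_num : (2:ℕ) ≠ 0)).comp tendsto_abs_atBot_atTop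
    simpa [sq_abs] using h2
  have h1 : Tendsto (fun x : ℝ => -x ^ 2 / 2) atBot atBot := by
    have h2 : Tendsto (fun x : ℝ => -x ^ 2) atBot atBot := tendsto_neg_atTop_atBot.comp hsq
    exact h2.atBot_div_const (by norm_num)
  have := (Real.tendsto_exp_atBot.comp h1).const_mul ((Real.sqrt (2 * Real.pi))⁻¹)
  simp only [mul_zero] at this
  have := this.neg
  rw [neg_zero] at this
  exact this.congr (fun x => by unfold stdPhi; simp [Function.comp])

lemma xphi_Iic (c : ℝ) : ∫ x in Iic c, x * stdPhi x = -stdPhi c := by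
  have := integral_Iic_of_hasDerivAt_of_tendsto' (a := c) (m := 0)
    (fun x _ => stdPhi_hasDeriv x) xphi_integrable.integrableOn stdPhi_tendsto_atBot
  simpa using this

lemma shift_Iic (g : ℝ → ℝ) (T m : ℝ) :
    ∫ x in Iic T, g (x - m) = ∫ x in Iic (T - m), g x := by
  rw [← integral_indicator measurableSet_Iic, ← integral_indicator measurableSet_Iic]
  rw [← integral_sub_right_eq_self (fun x => Set.indicator (Iic (T - m)) g x) m]
  congr 1
  funext x
  simp only [Set.indicator_apply, mem_Iic, sub_le_sub_iff_right]

lemma cdf_shift (T m : ℝ) : ∫ x in Iic T, stdPhi (x - m) = stdCDF (T - m) :=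
  shift_Iic stdPhi T m

lemma xphi_shift (T m : ℝ) :
    ∫ x in Iic T, x * stdPhi (x - m) = m * stdCDF (T - m) - stdPhi (T - m) := by
  have h : (fun x => x * stdPhi (x - m)) = fun x => (fun u => (u + m) * stdPhi u) (x - m) := by
    funext x; ring_nf
  rw [h, shift_Iic (fun u => (u + m) * stdPhi u) T m]
  have hsplit : ∀ u : ℝ, (u + m) * stdPhi u = u * stdPhi u + m * stdPhi u := fun u => by ring
  simp_rw [hsplit]
  rw [integral_add xphi_integrable.integrableOn ((stdPhi_integrable.const_mul m).integrableOn)]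
  rw [xphi_Iic, integral_const_mul]
  unfold stdCDF
  ring

lemma cdf_neg_add (c : ℝ) : stdCDF c + stdCDF (-c) = 1 := by
  have h1 : stdCDF (-c) = ∫ x in Ioi c, stdPhi x := by
    unfold stdCDF
    rw [← integral_comp_neg_Ioi]
    simp_rw [stdPhi_even]
  rw [h1]
  unfold stdCDF
  rw [intervalIntegral.integral_Iic_add_Ioi stdPhi_integrable.integrableOn stdPhi_integrable.integrableOn,
    stdPhi_total]

lemma xphi_total : ∫ x, x * stdPhi x = 0 := by
  have h0 : ∫ x in Ioi (0:ℝ), x * stdPhi x = stdPhi 0 := by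
    have h3 := integral_comp_neg_Ioi (0:ℝ) (fun y => -y * stdPhi (-y))
    simp only [neg_neg, neg_zero] at h3
    rw [h3]
    simp_rw [stdPhi_even, neg_mul]
    rw [integral_neg, xphi_Iic]
    simp
  rw [← intervalIntegral.integral_Iic_add_Ioi xphi_integrable.integrableOn xphi_integrable.integrableOn,
    xphi_Iic, h0]
  ring

lemma phi_shift_total (m : ℝ) : ∫ x, stdPhi (x - m) = 1 := by
  rw [integral_sub_right_eq_self stdPhi m, stdPhi_total]

lemma xphi_shift_total (m : ℝ) : ∫ x, x * stdPhi (x - m) = m := by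
  have h : (fun x => x * stdPhi (x - m)) = fun x => (fun u => (u + m) * stdPhi u) (x - m) := by
    funext x; ring_nf
  rw [h, integral_sub_right_eq_self (fun u => (u + m) * stdPhi u) m]
  have hsplit : ∀ u : ℝ, (u + m) * stdPhi u = u * stdPhi u + m * stdPhi u := fun u => by ring
  simp_rw [hsplit]
  rw [integral_add xphi_integrable (stdPhi_integrable.const_mul m), xphi_total,
    integral_const_mul, stdPhi_total]
  ring

lemma phi_shift_integrable (m : ℝ) : Integrable (fun x => stdPhi (x - m)) :=
  stdPhi_integrable.comp_sub_right m

lemma xphi_shift_integrable (m : ℝ) : Integrable (fun x => x * stdPhi (x - m)) := by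
  have h : (fun x => x * stdPhi (x - m)) = fun x => (fun u => (u + m) * stdPhi u) (x - m) := by
    funext x; ring_nf
  rw [h]
  have h2 : Integrable (fun u : ℝ => (u + m) * stdPhi u) := by
    have hsplit : (fun u : ℝ => (u + m) * stdPhi u)
        = fun u => u * stdPhi u + m * stdPhi u := by funext u; ring
    rw [hsplit]
    exact xphi_integrable.add (stdPhi_integrable.const_mul m)
  exact h2.comp_sub_right m

theorem stmt11 (t a : ℝ) (ha : 0 < a)
    (f : ℝ → ℝ)
    (hf : ∀ x, f x = (1 / 2) * stdPhi (x - (t - a)) + (1 / 2) * stdPhi (x - (t + a))) :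
    (∫ x in Set.Iic t, x * f x) / (∫ x in Set.Iic t, f x) =
      t - a * (1 - 2 * stdCDF (-a)) - 2 * stdPhi (-a) ∧
    (∫ x in Set.Iic t, x * f x) / (∫ x in Set.Iic t, f x) =
      -a * (1 - 2 * stdCDF (-a)) - 2 * stdPhi a + t ∧
    (∫ x in Set.Ici t, x * f x) / (∫ x in Set.Ici t, f x) =
      2 * t - ((∫ x in Set.Iic t, x * f x) / (∫ x in Set.Iic t, f x)) := by
  have hfe : f = fun x => (1 / 2) * stdPhi (x - (t - a)) + (1 / 2) * stdPhi (x - (t + a)) :=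
    funext hf
  have hxfe : (fun x => x * f x) = fun x =>
      (1 / 2) * (x * stdPhi (x - (t - a))) + (1 / 2) * (x * stdPhi (x - (t + a))) := by
    funext x; rw [hf]; ring
  have hfI : Integrable f := by
    rw [hfe]
    exact ((phi_shift_integrable _).const_mul _).add ((phi_shift_integrable _).const_mul _)
  have hxfI : Integrable (fun x => x * f x) := by
    rw [hxfe]
    exact ((xphi_shift_integrable _).const_mul _).add ((xphi_shift_integrable _).const_mul _)
  have h1 : t - (t - a) = a := by ring
  have h2 : t - (t + a) = -a := by ring
  have hden : ∫ x in Set.Iic t, f x = 1 / 2 := by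
    rw [hfe]
    rw [integral_add ((phi_shift_integrable _).const_mul _).integrableOn
      ((phi_shift_integrable _).const_mul _).integrableOn, integral_const_mul, integral_const_mul,
      cdf_shift, cdf_shift, h1, h2]
    have := cdf_neg_add a
    linarith
  have hnum : ∫ x in Set.Iic t, x * f x =
      (1 / 2) * ((t - a) * stdCDF a - stdPhi a) + (1 / 2) * ((t + a) * stdCDF (-a) - stdPhi (-a)) := by
    rw [show (fun x => x * f x) = _ from hxfe] at *
    rw [integral_add ((xphi_shift_integrable _).const_mul _).integrableOn
      ((xphi_shift_integrable _).const_mul _).integrableOn, integral_const_mul, integral_const_mul,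
      xphi_shift, xphi_shift, h1, h2]
  have htotf : ∫ x, f x = 1 := by
    rw [hfe, integral_add ((phi_shift_integrable _).const_mul _)
      ((phi_shift_integrable _).const_mul _), integral_const_mul, integral_const_mul,
      phi_shift_total, phi_shift_total]
    norm_num
  have htotxf : ∫ x, x * f x = t := by
    rw [show (fun x => x * f x) = _ from hxfe,
      integral_add ((xphi_shift_integrable _).const_mul _)
      ((xphi_shift_integrable _).const_mul _), integral_const_mul, integral_const_mul,
      xphi_shift_total, xphi_shift_total]
    ring
  have hIciden : ∫ x in Set.Ici t, f x = 1 / 2 := by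
    rw [integral_Ici_eq_integral_Ioi]
    have := intervalIntegral.integral_Iic_add_Ioi (b := t) hfI.integrableOn hfI.integrableOn
    rw [htotf, hden] at this
    linarith
  have hIcinum : ∫ x in Set.Ici t, x * f x = t - ∫ x in Set.Iic t, x * f x := by
    rw [integral_Ici_eq_integral_Ioi]
    have := intervalIntegral.integral_Iic_add_Ioi (b := t) hxfI.integrableOn hxfI.integrableOn
    rw [htotxf] at this
    linarith
  have hΦ : stdCDF a = 1 - stdCDF (-a) := by have := cdf_neg_add a; linarith
  have hφ : stdPhi (-a) = stdPhi a := stdPhi_even a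
  refine ⟨?_, ?_, ?_⟩
  · rw [hnum, hden, hφ, hΦ]; ring
  · rw [hnum, hden, hφ, hΦ]; ring
  · rw [hIcinum, hIciden, hnum, hden]; ring
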